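/- arXiv:2101.00517 — 2 statements merged into one kernel-verified Lean document; each statement's English description precedes it below -/
import Mathlib

section
/- Suppose R₀ < 1, and let M be a subset of the nonnegative orthant of ℝ⁷ that is positively invariant for the COVID-19 system and such that (β₁S° − (β₁ − β₂·I/(b+I))·S)·(I + θA) ≥ 0 for every (S,Q,E,A,I,H,R) ∈ M. Then for every solution x with x(0) ∈ M, the infected components satisfy E(t) → 0, A(t) → 0 and I(t) → 0 as t → ∞, and x(t) converges to the disease-free equilibrium ℰ° = (S°, Q°, 0, 0, 0, 0, 0). -/
open scoped BigOperators

/-- The vector field of the deterministic SQEAIHR COVID-19 model.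
State: `x = (S, Q, E, A, I, H, R)` indexed by `Fin 7`. -/
noncomputable def covidF (Λ b q lam μ σ εA γA dA εI γI dI γH dH θ p β₁ β₂ : ℝ)
    (x : Fin 7 → ℝ) : Fin 7 → ℝ :=
  ![Λ - (β₁ - β₂ * x 4 / (b + x 4)) * x 0 * (x 4 + θ * x 3) + lam * x 1 - (μ + q) * x 0,
    q * x 0 - (μ + lam) * x 1,
    (β₁ - β₂ * x 4 / (b + x 4)) * x 0 * (x 4 + θ * x 3) - (μ + σ) * x 2,
    (1 - p) * σ * x 2 - (μ + εA + γA + dA) * x 3,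
    σ * p * x 2 - (μ + εI + γI + dI) * x 4,
    εI * x 4 + εA * x 3 - (μ + dH + γH) * x 5,
    γH * x 5 + γI * x 4 + γA * x 3 - μ * x 6]

/-- A solution of the system on `[0, ∞)`: a function differentiable (within `[0,∞)`) whose
derivative equals the vector field at every `t ≥ 0`. -/
def IsSolution (F : (Fin 7 → ℝ) → Fin 7 → ℝ) (x : ℝ → Fin 7 → ℝ) : Prop :=
  ∀ t : ℝ, 0 ≤ t → HasDerivWithinAt x (F (x t)) (Set.Ici (0 : ℝ)) t

/-- Gronwall-type comparison: if `y' = d` on `[T,∞)` with `d ≤ -k y + c`, then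
`y t ≤ c/k + (y T - c/k) exp (-k (t-T))`. -/
lemma decay_le {y d : ℝ → ℝ} {k c T : ℝ} (hk : 0 < k)
    (hy : ∀ t ∈ Set.Ici T, HasDerivWithinAt y (d t) (Set.Ici T) t)
    (hd : ∀ t ∈ Set.Ici T, d t ≤ -k * y t + c) :
    ∀ t ∈ Set.Ici T, y t ≤ c / k + (y T - c / k) * Real.exp (-(k * (t - T))) := by
  set φ : ℝ → ℝ := fun t => (y t - c / k) * Real.exp (k * (t - T)) with hφ
  have hder : ∀ t ∈ Set.Ici T, HasDerivWithinAt φ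
      ((d t) * Real.exp (k * (t - T)) + (y t - c / k) * (Real.exp (k * (t - T)) * k)) (Set.Ici T) t := by
    intro t ht
    have hexp : HasDerivAt (fun t => Real.exp (k * (t - T))) (Real.exp (k * (t - T)) * k) t := by
      simpa using (((hasDerivAt_id t).sub_const T).const_mul k).exp
    exact ((hy t ht).sub_const _).mul hexp.hasDerivWithinAt
  have hmono : AntitoneOn φ (Set.Ici T) := by
    apply antitoneOn_of_hasDerivWithinAt_nonpos (convex_Ici T)
      (fun t ht => ((hder t ht).continuousWithinAt))
      (f' := fun t => (d t) * Real.exp (k * (t - T)) + (y t - c / k) * (Real.exp (k * (t - T)) * k))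
    · intro t ht
      rw [interior_Ici] at ht
      exact (hder t (Set.mem_Ici.mpr (le_of_lt (Set.mem_Ioi.mp ht)))).mono (by rw [interior_Ici]; exact Set.Ioi_subset_Ici_self)
    · intro t ht
      rw [interior_Ici] at ht
      have h1 := hd t (Set.mem_Ici.mpr (le_of_lt (Set.mem_Ioi.mp ht)))
      have h2 : (0:ℝ) < Real.exp (k * (t - T)) := Real.exp_pos _
      have : d t * Real.exp (k * (t - T)) + (y t - c / k) * (Real.exp (k * (t - T)) * k)
          = (d t + k * y t - c) * Real.exp (k * (t - T)) := by
        field_simp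
        ring
      rw [this]
      have : d t + k * y t - c ≤ 0 := by linarith
      exact mul_nonpos_of_nonpos_of_nonneg this (le_of_lt h2)
  intro t ht
  have := hmono (Set.self_mem_Ici) ht ht
  have hT : φ T = y T - c / k := by simp [hφ]
  have hexp : (0:ℝ) < Real.exp (k * (t - T)) := Real.exp_pos _
  have h2 : (y t - c / k) * Real.exp (k * (t - T)) ≤ y T - c / k := by
    rw [← hT]; exact this
  have h3 : Real.exp (-(k * (t - T))) = (Real.exp (k * (t - T)))⁻¹ := by
    rw [Real.exp_neg]
  rw [h3]
  have h4 := mul_le_mul_of_nonneg_right h2 (inv_pos.mpr hexp).le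
  rw [mul_assoc, mul_inv_cancel₀ (ne_of_gt hexp), mul_one] at h4
  linarith

lemma tendsto_exp_decay (C k T : ℝ) (hk : 0 < k) :
    Filter.Tendsto (fun t => C * Real.exp (-(k * (t - T)))) Filter.atTop (nhds 0) := by
  have h1 : Filter.Tendsto (fun t : ℝ => k * (t - T)) Filter.atTop Filter.atTop := by
    apply Filter.Tendsto.const_mul_atTop hk
    simpa [sub_eq_add_neg] using Filter.tendsto_atTop_add_const_right Filter.atTop (-T) Filter.tendsto_id
  have h2 : Filter.Tendsto (fun t : ℝ => -(k * (t - T))) Filter.atTop Filter.atBot :=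
    Filter.tendsto_neg_atBot_iff.mpr h1
  simpa using (Real.tendsto_exp_atBot.comp h2).const_mul C

lemma decay_tendsto {y h : ℝ → ℝ} {k : ℝ} (hk : 0 < k)
    (hy : ∀ t ∈ Set.Ici (0:ℝ), HasDerivWithinAt y (h t - k * y t) (Set.Ici (0:ℝ)) t)
    (hh : Filter.Tendsto h Filter.atTop (nhds 0)) :
    Filter.Tendsto y Filter.atTop (nhds 0) := by
  rw [NormedAddCommGroup.tendsto_nhds_zero]
  intro ε hε
  have hh' := NormedAddCommGroup.tendsto_nhds_zero.mp hh (k * (ε/2)) (by positivity)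
  rw [Filter.eventually_atTop] at hh'
  obtain ⟨T₀, hT₀⟩ := hh'
  set T := max T₀ 0 with hT
  have hT0 : (0:ℝ) ≤ T := le_max_right _ _
  have hsub : Set.Ici T ⊆ Set.Ici (0:ℝ) := Set.Ici_subset_Ici.mpr hT0
  have hbnd : ∀ t ∈ Set.Ici T, |h t| ≤ k * (ε/2) := by
    intro t ht
    exact (le_of_lt (by simpa [Real.norm_eq_abs] using hT₀ t (le_trans (le_max_left _ _) ht)))
  have hU := decay_le (c := k*(ε/2)) hk (fun t ht => (hy t (hsub ht)).mono hsub)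
    (fun t ht => by have := hbnd t ht; rw [abs_le] at this; linarith) 
  have hL := decay_le (c := k*(ε/2)) hk (d := fun t => -(h t - k * y t)) (y := fun t => - y t)
    (fun t ht => ((hy t (hsub ht)).mono hsub).neg)
    (fun t ht => by have := hbnd t ht; rw [abs_le] at this; simp only [neg_mul]; linarith) 
  have e2 : k * (ε/2) / k = ε/2 := by field_simp
  rw [e2] at hU hL
  have tU := NormedAddCommGroup.tendsto_nhds_zero.mp
    (tendsto_exp_decay (y T - ε/2) k T hk) (ε/2) (by positivity)
  have tL := NormedAddCommGroup.tendsto_nhds_zero.mp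
    (tendsto_exp_decay (-y T - ε/2) k T hk) (ε/2) (by positivity)
  filter_upwards [Filter.eventually_ge_atTop T, tU, tL] with t ht h1 h2
  rw [Real.norm_eq_abs] at h1 h2 ⊢
  have b1 := hU t ht
  have b2 := hL t ht
  rw [abs_lt] at h1 h2
  rw [abs_lt]
  constructor <;> linarith

lemma exists_lyap_coeffs {B kE kA kI σ θ p : ℝ} (hB : 0 < B) (hkE : 0 < kE) (hkA : 0 < kA)
    (hkI : 0 < kI) (hσ : 0 < σ) (hθ0 : 0 < θ) (hp0 : 0 < p) (hp1 : p < 1)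
    (hr : σ * B * (θ * (1 - p) / kA + p / kI) < kE) :
    ∃ a c ε : ℝ, 0 < a ∧ 0 < c ∧ 0 < ε ∧
      σ * (a * (1 - p) + c * p) ≤ kE - ε ∧ B * θ ≤ (kA - ε) * a ∧ B ≤ (kI - ε) * c := by
  set X := σ * B * (θ * (1 - p) / kA + p / kI) with hX
  have hp1' : 0 < 1 - p := by linarith
  have hX0 : 0 < X := by
    rw [hX]
    have h1 : 0 < θ * (1 - p) / kA := by positivity
    have h2 : 0 < p / kI := by positivity
    positivity
  set r := X / kE with hrdef
  have hr0 : 0 < r := div_pos hX0 hkE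
  have hr1 : r < 1 := (div_lt_one hkE).mpr hr
  set s := (1 + r) / 2 with hsdef
  have hs0 : 0 < s := by rw [hsdef]; linarith
  have hsr : r < s := by rw [hsdef]; linarith
  have hs1 : s < 1 := by rw [hsdef]; linarith
  have hXr : X = r * kE := by rw [hrdef]; field_simp
  refine ⟨B * θ / (kA * s), B / (kI * s),
    min ((kE * s - X) / s) (min (kA * (1 - s)) (kI * (1 - s))), ?_, ?_, ?_, ?_, ?_, ?_⟩
  · positivity
  · positivity
  · have h1 : 0 < (kE * s - X) / s := by
      apply div_pos _ hs0
      nlinarith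
    have h2 : 0 < kA * (1 - s) := by nlinarith
    have h3 : 0 < kI * (1 - s) := by nlinarith
    exact lt_min h1 (lt_min h2 h3)
  · have h1 : min ((kE * s - X) / s) (min (kA * (1 - s)) (kI * (1 - s))) ≤ (kE * s - X) / s :=
      min_le_left _ _
    have h2 : σ * (B * θ / (kA * s) * (1 - p) + B / (kI * s) * p) = X / s := by
      rw [hX]; field_simp
    have h3 : (kE * s - X) / s + X / s = kE := by field_simp; ring
    linarith
  · have h1 : min ((kE * s - X) / s) (min (kA * (1 - s)) (kI * (1 - s))) ≤ kA * (1 - s) :=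
      le_trans (min_le_right _ _) (min_le_left _ _)
    have h2 : kA * s ≤ kA - min ((kE * s - X) / s) (min (kA * (1 - s)) (kI * (1 - s))) := by
      nlinarith
    have h3 : (kA * s) * (B * θ / (kA * s)) = B * θ := by field_simp
    have h4 := mul_le_mul_of_nonneg_right h2 (by positivity : (0:ℝ) ≤ B * θ / (kA * s))
    rw [h3] at h4
    exact h4
  · have h1 : min ((kE * s - X) / s) (min (kA * (1 - s)) (kI * (1 - s))) ≤ kI * (1 - s) :=
      le_trans (min_le_right _ _) (min_le_right _ _)
    have h2 : kI * s ≤ kI - min ((kE * s - X) / s) (min (kA * (1 - s)) (kI * (1 - s))) := by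
      nlinarith
    have h3 : (kI * s) * (B / (kI * s)) = B := by field_simp
    have h4 := mul_le_mul_of_nonneg_right h2 (by positivity : (0:ℝ) ≤ B / (kI * s))
    rw [h3] at h4
    exact h4


set_option maxHeartbeats 1000000

/-- if `R₀ < 1` and `M` is a positively invariant subset of the nonnegative
orthant on which `f̂ ≥ 0`, then every solution starting in `M` has vanishing infected
components and converges to the disease-free equilibrium `ℰ°`. -/
theorem covid_DFE_global_stability_on_M
    (Λ b q lam μ σ εA γA dA εI γI dI γH dH θ p β₁ β₂ : ℝ)
    (hΛ : 0 < Λ) (hb : 0 < b) (hq : 0 < q) (hlam : 0 < lam) (hμ : 0 < μ)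
    (hσ : 0 < σ) (hεA : 0 < εA) (hγA : 0 < γA) (hdA : 0 < dA)
    (hεI : 0 < εI) (hγI : 0 < γI) (hdI : 0 < dI) (hγH : 0 < γH) (hdH : 0 < dH)
    (hθ : θ ∈ Set.Ioo (0 : ℝ) 1) (hp : p ∈ Set.Ioo (0 : ℝ) 1)
    (hβ₂ : 0 < β₂) (hβ : β₂ ≤ β₁)
    (hR0 : ((θ * (1 - p) / (μ + dA + εA + γA) + p / (μ + dI + εI + γI)) * (σ * β₁ * (Λ / μ * ((μ + lam) / (μ + q + lam))) / (μ + σ))) < 1)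
    (M : Set (Fin 7 → ℝ))
    (hMsub : ∀ y ∈ M, ∀ i, 0 ≤ y i)
    (hMinv : ∀ x : ℝ → Fin 7 → ℝ, IsSolution (covidF Λ b q lam μ σ εA γA dA εI γI dI γH dH θ p β₁ β₂) x → x 0 ∈ M →
      ∀ t : ℝ, 0 ≤ t → x t ∈ M)
    (hfhat : ∀ y ∈ M,
      0 ≤ (β₁ * (Λ / μ * ((μ + lam) / (μ + q + lam))) - (β₁ - β₂ * y 4 / (b + y 4)) * y 0) * (y 4 + θ * y 3)) :
    ∀ x : ℝ → Fin 7 → ℝ, IsSolution (covidF Λ b q lam μ σ εA γA dA εI γI dI γH dH θ p β₁ β₂) x → x 0 ∈ M →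
      Filter.Tendsto (fun t => x t 2) Filter.atTop (nhds 0) ∧
      Filter.Tendsto (fun t => x t 3) Filter.atTop (nhds 0) ∧
      Filter.Tendsto (fun t => x t 4) Filter.atTop (nhds 0) ∧
      Filter.Tendsto x Filter.atTop (nhds (![Λ / μ * ((μ + lam) / (μ + q + lam)), Λ / μ * (q / (μ + q + lam)), 0, 0, 0, 0, 0])) := by
  intro x hx hx0
  obtain ⟨hθ0, hθ1⟩ := hθ
  obtain ⟨hp0, hp1⟩ := hp
  have hβ₁ : 0 < β₁ := lt_of_lt_of_le hβ₂ hβ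
  have hμ' : μ ≠ 0 := ne_of_gt hμ
  have hμql : (0:ℝ) < μ + q + lam := by linarith
  have hμql' : μ + q + lam ≠ 0 := ne_of_gt hμql
  set S0 := Λ / μ * ((μ + lam) / (μ + q + lam)) with hS0eq
  set Q0 := Λ / μ * (q / (μ + q + lam)) with hQ0eq
  have hS0 : 0 < S0 := by
    rw [hS0eq]
    exact mul_pos (div_pos hΛ hμ) (div_pos (by linarith) hμql)
  have hkE : (0:ℝ) < μ + σ := by linarith
  have hkA : (0:ℝ) < μ + εA + γA + dA := by linarith
  have hkI : (0:ℝ) < μ + εI + γI + dI := by linarith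
  -- convert R₀ < 1
  have hR0' : σ * (β₁ * S0) * (θ * (1 - p) / (μ + εA + γA + dA) + p / (μ + εI + γI + dI))
      < μ + σ := by
    rw [← div_lt_one hkE]
    calc σ * (β₁ * S0) * (θ * (1 - p) / (μ + εA + γA + dA) + p / (μ + εI + γI + dI)) / (μ + σ)
        = (θ * (1 - p) / (μ + dA + εA + γA) + p / (μ + dI + εI + γI)) * (σ * β₁ * S0 / (μ + σ)) := by
          ring_nf
      _ < 1 := hR0
  obtain ⟨a, c, ε, ha, hc, hε, hi, hii, hiii⟩ :=
    exists_lyap_coeffs (mul_pos hβ₁ hS0) hkE hkA hkI hσ hθ0 hp0 hp1 hR0'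
  -- basic facts about the solution
  have hmem : ∀ t ∈ Set.Ici (0:ℝ), x t ∈ M := fun t ht => hMinv x hx hx0 t ht
  have hnn : ∀ t ∈ Set.Ici (0:ℝ), ∀ i, 0 ≤ x t i := fun t ht => hMsub _ (hmem t ht)
  have hdc : ∀ (i : Fin 7), ∀ t ∈ Set.Ici (0:ℝ), HasDerivWithinAt (fun τ => x τ i)
      (covidF Λ b q lam μ σ εA γA dA εI γI dI γH dH θ p β₁ β₂ (x t) i) (Set.Ici (0:ℝ)) t :=
    fun i t ht =>
      (ContinuousLinearMap.proj (R := ℝ) (φ := fun _ : Fin 7 => ℝ) i).hasFDerivAt.comp_hasDerivWithinAt t (hx t ht)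
  -- Lyapunov function
  have hVd : ∀ t ∈ Set.Ici (0:ℝ), HasDerivWithinAt (fun τ => x τ 2 + a * x τ 3 + c * x τ 4)
      ((fun τ => covidF Λ b q lam μ σ εA γA dA εI γI dI γH dH θ p β₁ β₂ (x τ) 2
        + a * covidF Λ b q lam μ σ εA γA dA εI γI dI γH dH θ p β₁ β₂ (x τ) 3
        + c * covidF Λ b q lam μ σ εA γA dA εI γI dI γH dH θ p β₁ β₂ (x τ) 4) t)
      (Set.Ici (0:ℝ)) t := fun t ht =>
    ((hdc 2 t ht).add ((hdc 3 t ht).const_mul a)).add ((hdc 4 t ht).const_mul c)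
  have key : ∀ t ∈ Set.Ici (0:ℝ),
      (fun τ => covidF Λ b q lam μ σ εA γA dA εI γI dI γH dH θ p β₁ β₂ (x τ) 2
        + a * covidF Λ b q lam μ σ εA γA dA εI γI dI γH dH θ p β₁ β₂ (x τ) 3
        + c * covidF Λ b q lam μ σ εA γA dA εI γI dI γH dH θ p β₁ β₂ (x τ) 4) t
      ≤ -ε * (x t 2 + a * x t 3 + c * x t 4) + 0 := by
    intro t ht
    have hy := hnn t ht
    have hfh := hfhat _ (hmem t ht)
    have e2 : covidF Λ b q lam μ σ εA γA dA εI γI dI γH dH θ p β₁ β₂ (x t) 2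
        = (β₁ - β₂ * x t 4 / (b + x t 4)) * x t 0 * (x t 4 + θ * x t 3) - (μ + σ) * x t 2 := rfl
    have e3 : covidF Λ b q lam μ σ εA γA dA εI γI dI γH dH θ p β₁ β₂ (x t) 3
        = (1 - p) * σ * x t 2 - (μ + εA + γA + dA) * x t 3 := rfl
    have e4 : covidF Λ b q lam μ σ εA γA dA εI γI dI γH dH θ p β₁ β₂ (x t) 4
        = σ * p * x t 2 - (μ + εI + γI + dI) * x t 4 := rfl
    simp only [e2, e3, e4]
    have hfh' : (β₁ - β₂ * x t 4 / (b + x t 4)) * x t 0 * (x t 4 + θ * x t 3)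
        ≤ β₁ * S0 * (x t 4 + θ * x t 3) := by linarith [hfh]
    have t2 := mul_le_mul_of_nonneg_right hi (hy 2)
    have t3 := mul_le_mul_of_nonneg_right hii (hy 3)
    have t4 := mul_le_mul_of_nonneg_right hiii (hy 4)
    linarith [t2, t3, t4, hfh']
  have hVle := decay_le (c := 0) hε hVd key
  have hVnn : ∀ t ∈ Set.Ici (0:ℝ), 0 ≤ x t 2 + a * x t 3 + c * x t 4 := by
    intro t ht
    have hy := hnn t ht
    have := mul_nonneg ha.le (hy 3)
    have := mul_nonneg hc.le (hy 4)
    linarith [hy 2]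
  have hub : Filter.Tendsto (fun t => 0 / ε + ((x 0 2 + a * x 0 3 + c * x 0 4) - 0 / ε)
      * Real.exp (-(ε * (t - 0)))) Filter.atTop (nhds 0) := by
    simpa using (tendsto_exp_decay ((x 0 2 + a * x 0 3 + c * x 0 4) - 0 / ε) ε 0 hε).const_add (0 / ε)
  have hVt : Filter.Tendsto (fun t => x t 2 + a * x t 3 + c * x t 4) Filter.atTop (nhds 0) := by
    apply tendsto_of_tendsto_of_tendsto_of_le_of_le' tendsto_const_nhds hub
    · filter_upwards [Filter.eventually_ge_atTop (0:ℝ)] with t ht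
      exact hVnn t ht
    · filter_upwards [Filter.eventually_ge_atTop (0:ℝ)] with t ht
      exact hVle t ht
  have hE : Filter.Tendsto (fun t => x t 2) Filter.atTop (nhds 0) := by
    apply tendsto_of_tendsto_of_tendsto_of_le_of_le' tendsto_const_nhds hVt
    · filter_upwards [Filter.eventually_ge_atTop (0:ℝ)] with t ht
      exact hnn t ht 2
    · filter_upwards [Filter.eventually_ge_atTop (0:ℝ)] with t ht
      have hy := hnn t ht
      have := mul_nonneg ha.le (hy 3)
      have := mul_nonneg hc.le (hy 4)
      linarith
  have hA : Filter.Tendsto (fun t => x t 3) Filter.atTop (nhds 0) := by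
    apply tendsto_of_tendsto_of_tendsto_of_le_of_le' tendsto_const_nhds
      (show Filter.Tendsto (fun t => (1/a) * (x t 2 + a * x t 3 + c * x t 4)) Filter.atTop (nhds 0)
        by simpa using hVt.const_mul (1/a))
    · filter_upwards [Filter.eventually_ge_atTop (0:ℝ)] with t ht
      exact hnn t ht 3
    · filter_upwards [Filter.eventually_ge_atTop (0:ℝ)] with t ht
      have hy := hnn t ht
      have h1 : a * x t 3 ≤ x t 2 + a * x t 3 + c * x t 4 := by
        have := mul_nonneg hc.le (hy 4)
        linarith [hy 2]
      have h2 := mul_le_mul_of_nonneg_left h1 (by positivity : (0:ℝ) ≤ 1/a)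
      have h3 : (1/a) * (a * x t 3) = x t 3 := by field_simp
      linarith [h2, h3.le, h3.ge]
  have hI : Filter.Tendsto (fun t => x t 4) Filter.atTop (nhds 0) := by
    apply tendsto_of_tendsto_of_tendsto_of_le_of_le' tendsto_const_nhds
      (show Filter.Tendsto (fun t => (1/c) * (x t 2 + a * x t 3 + c * x t 4)) Filter.atTop (nhds 0)
        by simpa using hVt.const_mul (1/c))
    · filter_upwards [Filter.eventually_ge_atTop (0:ℝ)] with t ht
      exact hnn t ht 4
    · filter_upwards [Filter.eventually_ge_atTop (0:ℝ)] with t ht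
      have hy := hnn t ht
      have h1 : c * x t 4 ≤ x t 2 + a * x t 3 + c * x t 4 := by
        have := mul_nonneg ha.le (hy 3)
        linarith [hy 2]
      have h2 := mul_le_mul_of_nonneg_left h1 (by positivity : (0:ℝ) ≤ 1/c)
      have h3 : (1/c) * (c * x t 4) = x t 4 := by field_simp
      linarith [h2, h3.le, h3.ge]
  -- boundedness of the total population
  have hNd : ∀ t ∈ Set.Ici (0:ℝ), HasDerivWithinAt
      (fun τ => x τ 0 + x τ 1 + x τ 2 + x τ 3 + x τ 4 + x τ 5 + x τ 6)
      ((fun τ => covidF Λ b q lam μ σ εA γA dA εI γI dI γH dH θ p β₁ β₂ (x τ) 0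
        + covidF Λ b q lam μ σ εA γA dA εI γI dI γH dH θ p β₁ β₂ (x τ) 1
        + covidF Λ b q lam μ σ εA γA dA εI γI dI γH dH θ p β₁ β₂ (x τ) 2
        + covidF Λ b q lam μ σ εA γA dA εI γI dI γH dH θ p β₁ β₂ (x τ) 3
        + covidF Λ b q lam μ σ εA γA dA εI γI dI γH dH θ p β₁ β₂ (x τ) 4
        + covidF Λ b q lam μ σ εA γA dA εI γI dI γH dH θ p β₁ β₂ (x τ) 5
        + covidF Λ b q lam μ σ εA γA dA εI γI dI γH dH θ p β₁ β₂ (x τ) 6) t)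
      (Set.Ici (0:ℝ)) t := fun t ht =>
    ((((((hdc 0 t ht).add (hdc 1 t ht)).add (hdc 2 t ht)).add (hdc 3 t ht)).add
      (hdc 4 t ht)).add (hdc 5 t ht)).add (hdc 6 t ht)
  have hNb : ∀ t ∈ Set.Ici (0:ℝ),
      (fun τ => covidF Λ b q lam μ σ εA γA dA εI γI dI γH dH θ p β₁ β₂ (x τ) 0
        + covidF Λ b q lam μ σ εA γA dA εI γI dI γH dH θ p β₁ β₂ (x τ) 1
        + covidF Λ b q lam μ σ εA γA dA εI γI dI γH dH θ p β₁ β₂ (x τ) 2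
        + covidF Λ b q lam μ σ εA γA dA εI γI dI γH dH θ p β₁ β₂ (x τ) 3
        + covidF Λ b q lam μ σ εA γA dA εI γI dI γH dH θ p β₁ β₂ (x τ) 4
        + covidF Λ b q lam μ σ εA γA dA εI γI dI γH dH θ p β₁ β₂ (x τ) 5
        + covidF Λ b q lam μ σ εA γA dA εI γI dI γH dH θ p β₁ β₂ (x τ) 6) t
      ≤ -μ * (x t 0 + x t 1 + x t 2 + x t 3 + x t 4 + x t 5 + x t 6) + Λ := by
    intro t ht
    have hy := hnn t ht
    have e0 : covidF Λ b q lam μ σ εA γA dA εI γI dI γH dH θ p β₁ β₂ (x t) 0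
        = Λ - (β₁ - β₂ * x t 4 / (b + x t 4)) * x t 0 * (x t 4 + θ * x t 3)
          + lam * x t 1 - (μ + q) * x t 0 := rfl
    have e1 : covidF Λ b q lam μ σ εA γA dA εI γI dI γH dH θ p β₁ β₂ (x t) 1
        = q * x t 0 - (μ + lam) * x t 1 := rfl
    have e2 : covidF Λ b q lam μ σ εA γA dA εI γI dI γH dH θ p β₁ β₂ (x t) 2
        = (β₁ - β₂ * x t 4 / (b + x t 4)) * x t 0 * (x t 4 + θ * x t 3) - (μ + σ) * x t 2 := rfl
    have e3 : covidF Λ b q lam μ σ εA γA dA εI γI dI γH dH θ p β₁ β₂ (x t) 3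
        = (1 - p) * σ * x t 2 - (μ + εA + γA + dA) * x t 3 := rfl
    have e4 : covidF Λ b q lam μ σ εA γA dA εI γI dI γH dH θ p β₁ β₂ (x t) 4
        = σ * p * x t 2 - (μ + εI + γI + dI) * x t 4 := rfl
    have e5 : covidF Λ b q lam μ σ εA γA dA εI γI dI γH dH θ p β₁ β₂ (x t) 5
        = εI * x t 4 + εA * x t 3 - (μ + dH + γH) * x t 5 := rfl
    have e6 : covidF Λ b q lam μ σ εA γA dA εI γI dI γH dH θ p β₁ β₂ (x t) 6
        = γH * x t 5 + γI * x t 4 + γA * x t 3 - μ * x t 6 := rfl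
    simp only [e0, e1, e2, e3, e4, e5, e6]
    have h3 := mul_nonneg hdA.le (hy 3)
    have h4 := mul_nonneg hdI.le (hy 4)
    have h5 := mul_nonneg hdH.le (hy 5)
    linarith
  have hNle := decay_le (c := Λ) hμ hNd hNb
  have hSmax : ∀ t ∈ Set.Ici (0:ℝ), x t 0
      ≤ Λ / μ + |(x 0 0 + x 0 1 + x 0 2 + x 0 3 + x 0 4 + x 0 5 + x 0 6) - Λ / μ| := by
    intro t ht
    have h1 := hNle t ht
    have hexp1 : Real.exp (-(μ * (t - 0))) ≤ 1 := by
      rw [Real.exp_le_one_iff]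
      have : (0:ℝ) ≤ t := ht
      nlinarith
    have hexp0 := (Real.exp_pos (-(μ * (t - 0)))).le
    set D := (x 0 0 + x 0 1 + x 0 2 + x 0 3 + x 0 4 + x 0 5 + x 0 6) - Λ / μ with hD
    have h3 : D * Real.exp (-(μ * (t - 0))) ≤ |D| := by
      nlinarith [le_abs_self D, abs_nonneg D,
        mul_nonneg (sub_nonneg.mpr (le_abs_self D)) hexp0,
        mul_nonneg (abs_nonneg D) (sub_nonneg.mpr hexp1)]
    have hy := hnn t ht
    have h6 : x t 0 ≤ x t 0 + x t 1 + x t 2 + x t 3 + x t 4 + x t 5 + x t 6 := by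
      linarith [hy 1, hy 2, hy 3, hy 4, hy 5, hy 6]
    calc x t 0 ≤ x t 0 + x t 1 + x t 2 + x t 3 + x t 4 + x t 5 + x t 6 := h6
      _ ≤ Λ / μ + D * Real.exp (-(μ * (t - 0))) := h1
      _ ≤ Λ / μ + |D| := by linarith [h3]
  -- the perturbation g tends to 0
  have hWt : Filter.Tendsto (fun t => x t 4 + θ * x t 3) Filter.atTop (nhds 0) := by
    simpa using hI.add (hA.const_mul θ)
  have hgt : Filter.Tendsto
      (fun t => (β₁ - β₂ * x t 4 / (b + x t 4)) * x t 0 * (x t 4 + θ * x t 3))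
      Filter.atTop (nhds 0) := by
    set Nmx := Λ / μ + |(x 0 0 + x 0 1 + x 0 2 + x 0 3 + x 0 4 + x 0 5 + x 0 6) - Λ / μ| with hNmx
    apply tendsto_of_tendsto_of_tendsto_of_le_of_le' tendsto_const_nhds
      (show Filter.Tendsto (fun t => (β₁ * Nmx) * (x t 4 + θ * x t 3)) Filter.atTop (nhds 0)
        by simpa using hWt.const_mul (β₁ * Nmx))
    · filter_upwards [Filter.eventually_ge_atTop (0:ℝ)] with t ht
      have hy := hnn t ht
      have hb4 : (0:ℝ) < b + x t 4 := by linarith [hy 4]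
      have hf0 : 0 ≤ β₁ - β₂ * x t 4 / (b + x t 4) := by
        have : β₂ * x t 4 / (b + x t 4) ≤ β₂ := by
          rw [div_le_iff₀ hb4]
          nlinarith [hy 4]
        linarith
      have hW0 : 0 ≤ x t 4 + θ * x t 3 := by
        have := mul_nonneg hθ0.le (hy 3)
        linarith [hy 4]
      exact mul_nonneg (mul_nonneg hf0 (hy 0)) hW0
    · filter_upwards [Filter.eventually_ge_atTop (0:ℝ)] with t ht
      have hy := hnn t ht
      have hb4 : (0:ℝ) < b + x t 4 := by linarith [hy 4]
      have hfβ : β₁ - β₂ * x t 4 / (b + x t 4) ≤ β₁ := by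
        have : 0 ≤ β₂ * x t 4 / (b + x t 4) :=
          div_nonneg (mul_nonneg hβ₂.le (hy 4)) hb4.le
        linarith
      have hf0 : 0 ≤ β₁ - β₂ * x t 4 / (b + x t 4) := by
        have : β₂ * x t 4 / (b + x t 4) ≤ β₂ := by
          rw [div_le_iff₀ hb4]
          nlinarith [hy 4]
        linarith
      have hW0 : 0 ≤ x t 4 + θ * x t 3 := by
        have := mul_nonneg hθ0.le (hy 3)
        linarith [hy 4]
      have hS := hSmax t ht
      have h1 : (β₁ - β₂ * x t 4 / (b + x t 4)) * x t 0 ≤ β₁ * Nmx :=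
        mul_le_mul hfβ hS (hy 0) hβ₁.le
      exact mul_le_mul_of_nonneg_right h1 hW0
  -- S + Q converges
  have hμSQ : μ * (S0 + Q0) = Λ := by
    rw [hS0eq, hQ0eq]
    field_simp
    ring
  have hqQ0 : q * S0 = (μ + lam) * Q0 := by
    rw [hS0eq, hQ0eq]
    field_simp
  have hsy : ∀ t ∈ Set.Ici (0:ℝ), HasDerivWithinAt (fun τ => x τ 0 + x τ 1 - (S0 + Q0))
      ((fun τ => -((β₁ - β₂ * x τ 4 / (b + x τ 4)) * x τ 0 * (x τ 4 + θ * x τ 3))) t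
        - μ * ((fun τ => x τ 0 + x τ 1 - (S0 + Q0)) t)) (Set.Ici (0:ℝ)) t := by
    intro t ht
    have h := ((hdc 0 t ht).add (hdc 1 t ht)).sub_const (S0 + Q0)
    have e : covidF Λ b q lam μ σ εA γA dA εI γI dI γH dH θ p β₁ β₂ (x t) 0
        + covidF Λ b q lam μ σ εA γA dA εI γI dI γH dH θ p β₁ β₂ (x t) 1
        = -((β₁ - β₂ * x t 4 / (b + x t 4)) * x t 0 * (x t 4 + θ * x t 3))
          - μ * (x t 0 + x t 1 - (S0 + Q0)) := by
      show (Λ - (β₁ - β₂ * x t 4 / (b + x t 4)) * x t 0 * (x t 4 + θ * x t 3)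
          + lam * x t 1 - (μ + q) * x t 0) + (q * x t 0 - (μ + lam) * x t 1) = _
      have : μ * (x t 0 + x t 1 - (S0 + Q0)) = μ * x t 0 + μ * x t 1 - μ * (S0 + Q0) := by ring
      rw [this, hμSQ]
      ring
    rw [e] at h
    exact h
  have hs_t : Filter.Tendsto (fun τ => x τ 0 + x τ 1 - (S0 + Q0)) Filter.atTop (nhds 0) := by
    apply decay_tendsto hμ hsy
    simpa using hgt.neg
  have hvy : ∀ t ∈ Set.Ici (0:ℝ), HasDerivWithinAt (fun τ => x τ 1 - Q0)
      ((fun τ => q * (x τ 0 + x τ 1 - (S0 + Q0))) t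
        - (μ + lam + q) * ((fun τ => x τ 1 - Q0) t)) (Set.Ici (0:ℝ)) t := by
    intro t ht
    have h := (hdc 1 t ht).sub_const Q0
    have e : covidF Λ b q lam μ σ εA γA dA εI γI dI γH dH θ p β₁ β₂ (x t) 1
        = q * (x t 0 + x t 1 - (S0 + Q0)) - (μ + lam + q) * (x t 1 - Q0) := by
      show q * x t 0 - (μ + lam) * x t 1 = _
      have : q * (x t 0 + x t 1 - (S0 + Q0)) - (μ + lam + q) * (x t 1 - Q0)
          = q * x t 0 - (μ + lam) * x t 1 - q * S0 + (μ + lam) * Q0 := by ring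
      rw [this]
      linarith [hqQ0]
    rw [e] at h
    exact h
  have hv_t : Filter.Tendsto (fun τ => x τ 1 - Q0) Filter.atTop (nhds 0) := by
    apply decay_tendsto (show (0:ℝ) < μ + lam + q by linarith) hvy
    simpa using hs_t.const_mul q
  -- H and R converge
  have hH_t : Filter.Tendsto (fun τ => x τ 5) Filter.atTop (nhds 0) := by
    apply decay_tendsto (show (0:ℝ) < μ + dH + γH by linarith)
      (h := fun τ => εI * x τ 4 + εA * x τ 3)
    · intro t ht
      exact hdc 5 t ht
    · simpa using (hI.const_mul εI).add (hA.const_mul εA)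
  have hR_t : Filter.Tendsto (fun τ => x τ 6) Filter.atTop (nhds 0) := by
    apply decay_tendsto hμ (h := fun τ => γH * x τ 5 + γI * x τ 4 + γA * x τ 3)
    · intro t ht
      exact hdc 6 t ht
    · simpa using ((hH_t.const_mul γH).add (hI.const_mul γI)).add (hA.const_mul γA)
  refine ⟨hE, hA, hI, ?_⟩
  rw [tendsto_pi_nhds]
  intro i
  fin_cases i
  · show Filter.Tendsto (fun t => x t 0) Filter.atTop (nhds S0)
    have heq : ∀ t, (x t 0 + x t 1 - (S0 + Q0)) - (x t 1 - Q0) + S0 = x t 0 := fun t => by ring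
    have h := (hs_t.sub hv_t).add_const S0
    simp only [sub_zero, zero_add, zero_sub, sub_self] at h
    refine Filter.Tendsto.congr heq ?_
    simpa using h
  · show Filter.Tendsto (fun t => x t 1) Filter.atTop (nhds Q0)
    have heq : ∀ t, (x t 1 - Q0) + Q0 = x t 1 := fun t => by ring
    refine Filter.Tendsto.congr heq ?_
    simpa using hv_t.add_const Q0
  · exact hE
  · exact hA
  · exact hI
  · exact hH_t
  · exact hR_t
end

section
/- If R₀ > 1, then there exists exactly one point x in the open positive orthant (0,∞)⁷ with F(x) = 0 (a unique endemic equilibrium of the COVID-19 system); if R₀ ≤ 1, then there is no point x ∈ (0,∞)⁷ with F(x) = 0. -/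
open scoped BigOperators

set_option maxHeartbeats 1000000

noncomputable def cG (Λ b q lam μ σ εA γA dA εI γI dI θ p β₁ β₂ : ℝ) (E : ℝ) : ℝ :=
  (β₁ - β₂ * (σ * p * E / (μ + εI + γI + dI)) / (b + σ * p * E / (μ + εI + γI + dI))) *
    (Λ - (μ + σ) * E) *
    (σ * p / (μ + εI + γI + dI) + θ * (1 - p) * σ / (μ + εA + γA + dA)) /
    (μ * (μ + q + lam) / (μ + lam))

noncomputable def cPhi (Λ q lam μ σ εA γA dA εI γI dI γH dH p : ℝ) (E : ℝ) : Fin 7 → ℝ :=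
  ![(Λ - (μ + σ) * E) / (μ * (μ + q + lam) / (μ + lam)),
    q * ((Λ - (μ + σ) * E) / (μ * (μ + q + lam) / (μ + lam))) / (μ + lam),
    E,
    (1 - p) * σ * E / (μ + εA + γA + dA),
    σ * p * E / (μ + εI + γI + dI),
    (εI * (σ * p * E / (μ + εI + γI + dI)) + εA * ((1 - p) * σ * E / (μ + εA + γA + dA))) /
      (μ + dH + γH),
    (γH * ((εI * (σ * p * E / (μ + εI + γI + dI)) + εA * ((1 - p) * σ * E / (μ + εA + γA + dA))) /
        (μ + dH + γH)) + γI * (σ * p * E / (μ + εI + γI + dI)) +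
        γA * ((1 - p) * σ * E / (μ + εA + γA + dA))) / μ]

lemma covid_char (Λ b q lam μ σ εA γA dA εI γI dI γH dH θ p β₁ β₂ : ℝ)
    (hΛ : 0 < Λ) (hb : 0 < b) (hq : 0 < q) (hlam : 0 < lam) (hμ : 0 < μ)
    (hσ : 0 < σ) (hεA : 0 < εA) (hγA : 0 < γA) (hdA : 0 < dA)
    (hεI : 0 < εI) (hγI : 0 < γI) (hdI : 0 < dI) (hγH : 0 < γH) (hdH : 0 < dH)
    (hθ0 : 0 < θ) (hθ1 : θ < 1) (hp0 : 0 < p) (hp1 : p < 1)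
    (hβ₂ : 0 < β₂) (hβlt : β₂ < β₁) (x : Fin 7 → ℝ) :
    ((∀ i, 0 < x i) ∧ covidF Λ b q lam μ σ εA γA dA εI γI dI γH dH θ p β₁ β₂ x = 0) ↔
    (0 < x 2 ∧ (μ + σ) * x 2 < Λ ∧
      cG Λ b q lam μ σ εA γA dA εI γI dI θ p β₁ β₂ (x 2) = μ + σ ∧
      x = cPhi Λ q lam μ σ εA γA dA εI γI dI γH dH p (x 2)) := by
  have hkI : (0:ℝ) < μ + εI + γI + dI := by positivity
  have hkA : (0:ℝ) < μ + εA + γA + dA := by positivity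
  have hkH : (0:ℝ) < μ + dH + γH := by positivity
  have hml : (0:ℝ) < μ + lam := by positivity
  have hC : (0:ℝ) < μ * (μ + q + lam) / (μ + lam) := by positivity
  have hp1' : (0:ℝ) < 1 - p := by linarith
  constructor
  · rintro ⟨hpos, hF⟩
    have hx2 : 0 < x 2 := hpos 2
    have hbx : 0 < b + σ * p * x 2 / (μ + εI + γI + dI) := by positivity
    have h0 : Λ - (β₁ - β₂ * x 4 / (b + x 4)) * x 0 * (x 4 + θ * x 3) + lam * x 1
        - (μ + q) * x 0 = 0 := congrFun hF 0
    have h1 : q * x 0 - (μ + lam) * x 1 = 0 := congrFun hF 1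
    have h2 : (β₁ - β₂ * x 4 / (b + x 4)) * x 0 * (x 4 + θ * x 3) - (μ + σ) * x 2 = 0 :=
      congrFun hF 2
    have h3 : (1 - p) * σ * x 2 - (μ + εA + γA + dA) * x 3 = 0 := congrFun hF 3
    have h4 : σ * p * x 2 - (μ + εI + γI + dI) * x 4 = 0 := congrFun hF 4
    have h5 : εI * x 4 + εA * x 3 - (μ + dH + γH) * x 5 = 0 := congrFun hF 5
    have h6 : γH * x 5 + γI * x 4 + γA * x 3 - μ * x 6 = 0 := congrFun hF 6
    have hx3 : x 3 = (1 - p) * σ * x 2 / (μ + εA + γA + dA) := by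
      field_simp; linarith
    have hx4 : x 4 = σ * p * x 2 / (μ + εI + γI + dI) := by
      field_simp; linarith
    have hx1 : x 1 = q * x 0 / (μ + lam) := by
      field_simp; linarith
    have hx5 : x 5 = (εI * x 4 + εA * x 3) / (μ + dH + γH) := by
      field_simp; linarith
    have hx6 : x 6 = (γH * x 5 + γI * x 4 + γA * x 3) / μ := by
      field_simp; linarith
    have hS : μ * (μ + q + lam) * x 0 = (Λ - (μ + σ) * x 2) * (μ + lam) := by
      linear_combination (-(μ + lam)) * h0 - (μ + lam) * h2 - lam * h1
    have hSlt : (μ + σ) * x 2 < Λ := by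
      have h' : 0 < (Λ - (μ + σ) * x 2) * (μ + lam) := by
        rw [← hS]; have := hpos 0; positivity
      nlinarith [h', hml]
    have hΛk : Λ - (μ + σ) * x 2 = μ * (μ + q + lam) / (μ + lam) * x 0 := by
      field_simp; linarith
    rw [hx4, hx3] at h2
    have key : (β₁ - β₂ * (σ * p * x 2 / (μ + εI + γI + dI)) /
          (b + σ * p * x 2 / (μ + εI + γI + dI))) * x 0 *
          (σ * p / (μ + εI + γI + dI) + θ * (1 - p) * σ / (μ + εA + γA + dA)) * x 2
        = (μ + σ) * x 2 := by
      linear_combination h2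
    have key2 : (β₁ - β₂ * (σ * p * x 2 / (μ + εI + γI + dI)) /
          (b + σ * p * x 2 / (μ + εI + γI + dI))) * x 0 *
          (σ * p / (μ + εI + γI + dI) + θ * (1 - p) * σ / (μ + εA + γA + dA))
        = μ + σ := mul_right_cancel₀ (ne_of_gt hx2) key
    refine ⟨hx2, hSlt, ?_, ?_⟩
    · have hcan : ∀ B M : ℝ, B * (μ * (μ + q + lam) / (μ + lam) * x 0) * M /
          (μ * (μ + q + lam) / (μ + lam)) = B * x 0 * M := by
        intro B M
        rw [show B * (μ * (μ + q + lam) / (μ + lam) * x 0) * M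
            = B * x 0 * M * (μ * (μ + q + lam) / (μ + lam)) from by ring,
          mul_div_assoc, div_self (ne_of_gt hC), mul_one]
      rw [← key2]
      unfold cG
      rw [hΛk, hcan]
    · funext i
      fin_cases i
      · show x 0 = (Λ - (μ + σ) * x 2) / (μ * (μ + q + lam) / (μ + lam))
        rw [hΛk]
        exact (mul_div_cancel_left₀ (x 0) (ne_of_gt hC)).symm
      · show x 1 = q * ((Λ - (μ + σ) * x 2) / (μ * (μ + q + lam) / (μ + lam))) / (μ + lam)
        rw [hΛk, mul_div_cancel_left₀ (x 0) (ne_of_gt hC)]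
        exact hx1
      · rfl
      · exact hx3
      · exact hx4
      · show x 5 = (εI * (σ * p * x 2 / (μ + εI + γI + dI)) +
          εA * ((1 - p) * σ * x 2 / (μ + εA + γA + dA))) / (μ + dH + γH)
        rw [hx5, hx4, hx3]
      · show x 6 = (γH * ((εI * (σ * p * x 2 / (μ + εI + γI + dI)) +
          εA * ((1 - p) * σ * x 2 / (μ + εA + γA + dA))) / (μ + dH + γH)) +
          γI * (σ * p * x 2 / (μ + εI + γI + dI)) +
          γA * ((1 - p) * σ * x 2 / (μ + εA + γA + dA))) / μ
        rw [hx6, hx5, hx4, hx3]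
  · rintro ⟨hE0, hEΛ, hg, hx⟩
    have hS0 : 0 < Λ - (μ + σ) * x 2 := by linarith
    have hbx : 0 < b + σ * p * x 2 / (μ + εI + γI + dI) := by positivity
    have hSpos : 0 < (Λ - (μ + σ) * x 2) / (μ * (μ + q + lam) / (μ + lam)) :=
      div_pos hS0 hC
    constructor
    · rw [hx]
      intro i
      fin_cases i
      · exact hSpos
      · exact div_pos (mul_pos hq hSpos) hml
      · exact hE0
      · exact div_pos (mul_pos (mul_pos hp1' hσ) hE0) hkA
      · exact div_pos (mul_pos (mul_pos hσ hp0) hE0) hkI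
      · refine div_pos (add_pos (mul_pos hεI ?_) (mul_pos hεA ?_)) hkH
        · exact div_pos (mul_pos (mul_pos hσ hp0) hE0) hkI
        · exact div_pos (mul_pos (mul_pos hp1' hσ) hE0) hkA
      · refine div_pos (add_pos (add_pos (mul_pos hγH ?_) (mul_pos hγI ?_))
          (mul_pos hγA ?_)) hμ
        · refine div_pos (add_pos (mul_pos hεI ?_) (mul_pos hεA ?_)) hkH
          · exact div_pos (mul_pos (mul_pos hσ hp0) hE0) hkI
          · exact div_pos (mul_pos (mul_pos hp1' hσ) hE0) hkA
        · exact div_pos (mul_pos (mul_pos hσ hp0) hE0) hkI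
        · exact div_pos (mul_pos (mul_pos hp1' hσ) hE0) hkA
    · set E := x 2 with hEdef
      have hT : (β₁ - β₂ * (σ * p * E / (μ + εI + γI + dI)) /
            (b + σ * p * E / (μ + εI + γI + dI))) *
            ((Λ - (μ + σ) * E) / (μ * (μ + q + lam) / (μ + lam))) *
            (σ * p * E / (μ + εI + γI + dI) + θ * ((1 - p) * σ * E / (μ + εA + γA + dA)))
          = (μ + σ) * E := by
        have hmul : σ * p * E / (μ + εI + γI + dI) + θ * ((1 - p) * σ * E / (μ + εA + γA + dA))
            = (σ * p / (μ + εI + γI + dI) + θ * (1 - p) * σ / (μ + εA + γA + dA)) * E := by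
          field_simp
        rw [hmul, show (β₁ - β₂ * (σ * p * E / (μ + εI + γI + dI)) /
            (b + σ * p * E / (μ + εI + γI + dI))) *
            ((Λ - (μ + σ) * E) / (μ * (μ + q + lam) / (μ + lam))) *
            ((σ * p / (μ + εI + γI + dI) + θ * (1 - p) * σ / (μ + εA + γA + dA)) * E)
          = cG Λ b q lam μ σ εA γA dA εI γI dI θ p β₁ β₂ E * E from by unfold cG; ring, hg]
      have hcan2 : ∀ c N : ℝ, c ≠ 0 → N - c * (N / c) = 0 := by
        intro c N hc; field_simp; ring
      rw [hx]
      funext i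
      fin_cases i
      · show Λ - (β₁ - β₂ * (σ * p * E / (μ + εI + γI + dI)) /
            (b + σ * p * E / (μ + εI + γI + dI))) *
            ((Λ - (μ + σ) * E) / (μ * (μ + q + lam) / (μ + lam))) *
            (σ * p * E / (μ + εI + γI + dI) + θ * ((1 - p) * σ * E / (μ + εA + γA + dA)))
            + lam * (q * ((Λ - (μ + σ) * E) / (μ * (μ + q + lam) / (μ + lam))) / (μ + lam))
            - (μ + q) * ((Λ - (μ + σ) * E) / (μ * (μ + q + lam) / (μ + lam))) = 0
        have hres : Λ - (μ + σ) * E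
            + lam * (q * ((Λ - (μ + σ) * E) / (μ * (μ + q + lam) / (μ + lam))) / (μ + lam))
            - (μ + q) * ((Λ - (μ + σ) * E) / (μ * (μ + q + lam) / (μ + lam))) = 0 := by
          field_simp
          ring
        linear_combination (-1 : ℝ) * hT + hres
      · show q * ((Λ - (μ + σ) * E) / (μ * (μ + q + lam) / (μ + lam)))
          - (μ + lam) * (q * ((Λ - (μ + σ) * E) / (μ * (μ + q + lam) / (μ + lam))) / (μ + lam)) = 0
        exact hcan2 _ _ (ne_of_gt hml)
      · show (β₁ - β₂ * (σ * p * E / (μ + εI + γI + dI)) /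
            (b + σ * p * E / (μ + εI + γI + dI))) *
            ((Λ - (μ + σ) * E) / (μ * (μ + q + lam) / (μ + lam))) *
            (σ * p * E / (μ + εI + γI + dI) + θ * ((1 - p) * σ * E / (μ + εA + γA + dA)))
            - (μ + σ) * E = 0
        linear_combination hT
      · show (1 - p) * σ * E - (μ + εA + γA + dA) * ((1 - p) * σ * E / (μ + εA + γA + dA)) = 0
        exact hcan2 _ _ (ne_of_gt hkA)
      · show σ * p * E - (μ + εI + γI + dI) * (σ * p * E / (μ + εI + γI + dI)) = 0
        exact hcan2 _ _ (ne_of_gt hkI)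
      · show εI * (σ * p * E / (μ + εI + γI + dI))
          + εA * ((1 - p) * σ * E / (μ + εA + γA + dA))
          - (μ + dH + γH) * ((εI * (σ * p * E / (μ + εI + γI + dI)) +
            εA * ((1 - p) * σ * E / (μ + εA + γA + dA))) / (μ + dH + γH)) = 0
        exact hcan2 _ _ (ne_of_gt hkH)
      · show γH * ((εI * (σ * p * E / (μ + εI + γI + dI)) +
            εA * ((1 - p) * σ * E / (μ + εA + γA + dA))) / (μ + dH + γH))
          + γI * (σ * p * E / (μ + εI + γI + dI))
          + γA * ((1 - p) * σ * E / (μ + εA + γA + dA))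
          - μ * ((γH * ((εI * (σ * p * E / (μ + εI + γI + dI)) +
            εA * ((1 - p) * σ * E / (μ + εA + γA + dA))) / (μ + dH + γH))
            + γI * (σ * p * E / (μ + εI + γI + dI))
            + γA * ((1 - p) * σ * E / (μ + εA + γA + dA))) / μ) = 0
        exact hcan2 _ _ (ne_of_gt hμ)

lemma cG_anti (Λ b q lam μ σ εA γA dA εI γI dI θ p β₁ β₂ : ℝ)
    (hΛ : 0 < Λ) (hb : 0 < b) (hq : 0 < q) (hlam : 0 < lam) (hμ : 0 < μ)
    (hσ : 0 < σ) (hεA : 0 < εA) (hγA : 0 < γA) (hdA : 0 < dA)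
    (hεI : 0 < εI) (hγI : 0 < γI) (hdI : 0 < dI)
    (hθ0 : 0 < θ) (hθ1 : θ < 1) (hp0 : 0 < p) (hp1 : p < 1)
    (hβ₂ : 0 < β₂) (hβlt : β₂ < β₁) {E1 E2 : ℝ}
    (h1 : 0 ≤ E1) (h12 : E1 < E2) (h2 : (μ + σ) * E2 ≤ Λ) :
    cG Λ b q lam μ σ εA γA dA εI γI dI θ p β₁ β₂ E2 <
      cG Λ b q lam μ σ εA γA dA εI γI dI θ p β₁ β₂ E1 := by
  have hkI : (0:ℝ) < μ + εI + γI + dI := by positivity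
  have hkA : (0:ℝ) < μ + εA + γA + dA := by positivity
  have hC : (0:ℝ) < μ * (μ + q + lam) / (μ + lam) := by positivity
  have hp1' : (0:ℝ) < 1 - p := by linarith
  have hI1 : 0 ≤ σ * p * E1 / (μ + εI + γI + dI) :=
    div_nonneg (mul_nonneg (mul_nonneg hσ.le hp0.le) h1) hkI.le
  have hI2 : 0 < σ * p * E2 / (μ + εI + γI + dI) :=
    div_pos (mul_pos (mul_pos hσ hp0) (lt_of_le_of_lt h1 h12)) hkI
  have hIlt : σ * p * E1 / (μ + εI + γI + dI) < σ * p * E2 / (μ + εI + γI + dI) := by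
    exact div_lt_div_of_pos_right (mul_lt_mul_of_pos_left h12 (mul_pos hσ hp0)) hkI
  have hb1 : (0:ℝ) < b + σ * p * E1 / (μ + εI + γI + dI) := by linarith
  have hb2 : (0:ℝ) < b + σ * p * E2 / (μ + εI + γI + dI) := by linarith
  have hBlt : β₁ - β₂ * (σ * p * E2 / (μ + εI + γI + dI)) /
        (b + σ * p * E2 / (μ + εI + γI + dI)) <
      β₁ - β₂ * (σ * p * E1 / (μ + εI + γI + dI)) /
        (b + σ * p * E1 / (μ + εI + γI + dI)) := by
    have : β₂ * (σ * p * E1 / (μ + εI + γI + dI)) / (b + σ * p * E1 / (μ + εI + γI + dI)) <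
        β₂ * (σ * p * E2 / (μ + εI + γI + dI)) / (b + σ * p * E2 / (μ + εI + γI + dI)) := by
      rw [div_lt_div_iff₀ hb1 hb2]
      nlinarith [mul_pos (mul_pos hβ₂ hb) (sub_pos.mpr hIlt), hIlt, hI1, hβ₂]
    linarith
  have hBpos : 0 < β₁ - β₂ * (σ * p * E2 / (μ + εI + γI + dI)) /
      (b + σ * p * E2 / (μ + εI + γI + dI)) := by
    have : β₂ * (σ * p * E2 / (μ + εI + γI + dI)) / (b + σ * p * E2 / (μ + εI + γI + dI))
        < β₂ := by
      rw [div_lt_iff₀ hb2]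
      nlinarith [hI2, hb, hβ₂]
    linarith
  have hY2 : 0 ≤ Λ - (μ + σ) * E2 := by linarith
  have hYlt : Λ - (μ + σ) * E2 < Λ - (μ + σ) * E1 := by nlinarith [hμ, hσ]
  have hm : (0:ℝ) < σ * p / (μ + εI + γI + dI) + θ * (1 - p) * σ / (μ + εA + γA + dA) := by
    positivity
  have hmain : (β₁ - β₂ * (σ * p * E2 / (μ + εI + γI + dI)) /
        (b + σ * p * E2 / (μ + εI + γI + dI))) * (Λ - (μ + σ) * E2) <
      (β₁ - β₂ * (σ * p * E1 / (μ + εI + γI + dI)) /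
        (b + σ * p * E1 / (μ + εI + γI + dI))) * (Λ - (μ + σ) * E1) := by
    calc (β₁ - β₂ * (σ * p * E2 / (μ + εI + γI + dI)) /
          (b + σ * p * E2 / (μ + εI + γI + dI))) * (Λ - (μ + σ) * E2)
        ≤ (β₁ - β₂ * (σ * p * E1 / (μ + εI + γI + dI)) /
          (b + σ * p * E1 / (μ + εI + γI + dI))) * (Λ - (μ + σ) * E2) :=
          mul_le_mul_of_nonneg_right hBlt.le hY2
      _ < (β₁ - β₂ * (σ * p * E1 / (μ + εI + γI + dI)) /
          (b + σ * p * E1 / (μ + εI + γI + dI))) * (Λ - (μ + σ) * E1) :=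
          mul_lt_mul_of_pos_left hYlt (lt_trans hBpos hBlt)
  unfold cG
  exact div_lt_div_of_pos_right (mul_lt_mul_of_pos_right hmain hm) hC

/-- existence/uniqueness of the endemic equilibrium: if `R₀ > 1` there is a
unique zero of `F` in the open positive orthant; if `R₀ ≤ 1` there is none. -/
theorem covid_endemic_equilibrium
    (Λ b q lam μ σ εA γA dA εI γI dI γH dH θ p β₁ β₂ : ℝ)
    (hΛ : 0 < Λ) (hb : 0 < b) (hq : 0 < q) (hlam : 0 < lam) (hμ : 0 < μ)
    (hσ : 0 < σ) (hεA : 0 < εA) (hγA : 0 < γA) (hdA : 0 < dA)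
    (hεI : 0 < εI) (hγI : 0 < γI) (hdI : 0 < dI) (hγH : 0 < γH) (hdH : 0 < dH)
    (hθ : θ ∈ Set.Ioo (0 : ℝ) 1) (hp : p ∈ Set.Ioo (0 : ℝ) 1)
    (hβ₂ : 0 < β₂) (hβ : β₂ ≤ β₁) (hβlt : β₂ < β₁) :
    (1 < ((θ * (1 - p) / (μ + dA + εA + γA) + p / (μ + dI + εI + γI)) * (σ * β₁ * (Λ / μ * ((μ + lam) / (μ + q + lam))) / (μ + σ))) →
      ∃! x : Fin 7 → ℝ, (∀ i, 0 < x i) ∧ (covidF Λ b q lam μ σ εA γA dA εI γI dI γH dH θ p β₁ β₂) x = 0) ∧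
    (((θ * (1 - p) / (μ + dA + εA + γA) + p / (μ + dI + εI + γI)) * (σ * β₁ * (Λ / μ * ((μ + lam) / (μ + q + lam))) / (μ + σ))) ≤ 1 →
      ¬ ∃ x : Fin 7 → ℝ, (∀ i, 0 < x i) ∧ (covidF Λ b q lam μ σ εA γA dA εI γI dI γH dH θ p β₁ β₂) x = 0) := by
  obtain ⟨hθ0, hθ1⟩ := hθ
  obtain ⟨hp0, hp1⟩ := hp
  have hk : (0:ℝ) < μ + σ := by positivity
  have hkI : (0:ℝ) < μ + εI + γI + dI := by positivity
  have hkA : (0:ℝ) < μ + εA + γA + dA := by positivity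
  have hql : (0:ℝ) < μ + q + lam := by positivity
  have hml : (0:ℝ) < μ + lam := by positivity
  have hC : (0:ℝ) < μ * (μ + q + lam) / (μ + lam) := by positivity
  have hp1' : (0:ℝ) < 1 - p := by linarith
  have hg0 : cG Λ b q lam μ σ εA γA dA εI γI dI θ p β₁ β₂ 0 = (μ + σ) *
      ((θ * (1 - p) / (μ + dA + εA + γA) + p / (μ + dI + εI + γI)) *
        (σ * β₁ * (Λ / μ * ((μ + lam) / (μ + q + lam))) / (μ + σ))) := by
    rw [show μ + dA + εA + γA = μ + εA + γA + dA from by ring,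
      show μ + dI + εI + γI = μ + εI + γI + dI from by ring]
    unfold cG
    norm_num
    field_simp
    ring
  have hgΛ : cG Λ b q lam μ σ εA γA dA εI γI dI θ p β₁ β₂ (Λ / (μ + σ)) = 0 := by
    unfold cG
    rw [show Λ - (μ + σ) * (Λ / (μ + σ)) = 0 from by field_simp; ring, mul_zero, zero_mul, zero_div]
  have hcont : ContinuousOn (cG Λ b q lam μ σ εA γA dA εI γI dI θ p β₁ β₂)
      (Set.Icc 0 (Λ / (μ + σ))) := by
    unfold cG
    apply ContinuousOn.div_const
    apply ContinuousOn.mul ?_ continuousOn_const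
    apply ContinuousOn.mul
    · apply ContinuousOn.sub continuousOn_const
      apply ContinuousOn.div (by fun_prop) (by fun_prop)
      intro E hE
      have hE0 : 0 ≤ E := hE.1
      have : 0 ≤ σ * p * E / (μ + εI + γI + dI) :=
        div_nonneg (mul_nonneg (mul_nonneg hσ.le hp0.le) hE0) hkI.le
      positivity
    · fun_prop
  have h0Λ : (0:ℝ) ≤ Λ / (μ + σ) := by positivity
  constructor
  · intro hR1
    have hmem : (μ + σ) ∈ Set.Icc
        (cG Λ b q lam μ σ εA γA dA εI γI dI θ p β₁ β₂ (Λ / (μ + σ)))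
        (cG Λ b q lam μ σ εA γA dA εI γI dI θ p β₁ β₂ 0) := by
      rw [hg0, hgΛ]
      constructor
      · linarith
      · nlinarith
    obtain ⟨E, hEmem, hgE⟩ := intermediate_value_Icc' h0Λ hcont hmem
    have hE0 : 0 < E := by
      rcases hEmem.1.eq_or_lt with h | h
      · exfalso; rw [← h, hg0] at hgE; nlinarith
      · exact h
    have hEΛ : (μ + σ) * E < Λ := by
      rcases hEmem.2.eq_or_lt with h | h
      · exfalso; rw [h, hgΛ] at hgE; linarith
      · rw [lt_div_iff₀ hk] at h; nlinarith
    refine ⟨cPhi Λ q lam μ σ εA γA dA εI γI dI γH dH p E, ?_, ?_⟩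
    · exact (covid_char Λ b q lam μ σ εA γA dA εI γI dI γH dH θ p β₁ β₂ hΛ hb hq hlam hμ hσ
        hεA hγA hdA hεI hγI hdI hγH hdH hθ0 hθ1 hp0 hp1 hβ₂ hβlt _).mpr ⟨hE0, hEΛ, hgE, rfl⟩
    · intro y hy
      obtain ⟨hy2, hyΛ, hyg, hyx⟩ := (covid_char Λ b q lam μ σ εA γA dA εI γI dI γH dH θ p β₁ β₂
        hΛ hb hq hlam hμ hσ hεA hγA hdA hεI hγI hdI hγH hdH hθ0 hθ1 hp0 hp1 hβ₂ hβlt y).mp hy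
      have hyE : y 2 = E := by
        by_contra hne
        rcases lt_or_gt_of_ne hne with hlt | hgt
        · have := cG_anti Λ b q lam μ σ εA γA dA εI γI dI θ p β₁ β₂ hΛ hb hq hlam hμ hσ
            hεA hγA hdA hεI hγI hdI hθ0 hθ1 hp0 hp1 hβ₂ hβlt hy2.le hlt hEΛ.le
          rw [hgE, hyg] at this; linarith
        · have := cG_anti Λ b q lam μ σ εA γA dA εI γI dI θ p β₁ β₂ hΛ hb hq hlam hμ hσ
            hεA hγA hdA hεI hγI hdI hθ0 hθ1 hp0 hp1 hβ₂ hβlt hE0.le hgt hyΛ.le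
          rw [hgE, hyg] at this; linarith
      rw [hyx, hyE]
  · intro hR1 ⟨y, hy⟩
    obtain ⟨hy2, hyΛ, hyg, hyx⟩ := (covid_char Λ b q lam μ σ εA γA dA εI γI dI γH dH θ p β₁ β₂
      hΛ hb hq hlam hμ hσ hεA hγA hdA hεI hγI hdI hγH hdH hθ0 hθ1 hp0 hp1 hβ₂ hβlt y).mp hy
    have := cG_anti Λ b q lam μ σ εA γA dA εI γI dI θ p β₁ β₂ hΛ hb hq hlam hμ hσ
      hεA hγA hdA hεI hγI hdI hθ0 hθ1 hp0 hp1 hβ₂ hβlt le_rfl hy2 hyΛ.le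
    rw [hyg, hg0] at this
    nlinarith
end
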